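/- Let 𝓕 be a finite set of finite simple graphs, G a finite simple graph, S ⊆ V(G), and T ⊆ V(G) \ S. Suppose that some tight enrichment of S with respect to 𝓕 contained in V(G) \ (S ∪ T) exists, but that there is no tight enrichment U ⊆ V(G) \ (S ∪ T) of S such that every connected component of G[U] is adjacent to a vertex of S. Then every tight enrichment U ⊆ V(G) \ (S ∪ T) of S of minimum cardinality induces a connected graph G[U], and no vertex of U is adjacent to a vertex of S. -/

import Mathlib

open SimpleGraph

/-- `u` can reach `v` in `G` by a walk whose support stays inside `A`. -/
def ReachIn {V : Type} (G : SimpleGraph V) (A : Set V) (u v : V) : Prop :=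
  ∃ w : G.Walk u v, ∀ x ∈ w.support, x ∈ A

/-- `D` is a union of connected components of `H`. -/
def ComponentClosed {W : Type} (H : SimpleGraph W) (D : Set W) : Prop :=
  ∀ x ∈ D, ∀ y : W, H.Reachable x y → y ∈ D

/-- `U` is a tight enrichment of `S` with respect to the family `Gf`: there is a
partial forbidden graph (an induced subgraph of some `Gf i` on a union `D` of its
connected components) and an induced-subgraph embedding `φ` of it into `G` with
`U = φ(D) \ S`, such that `G[S]` contains no induced copy of that partial
forbidden graph. -/
def TightEnrichment {V : Type} {ι : Type} {Fv : ι → Type}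
    (Gf : ∀ i, SimpleGraph (Fv i)) (G : SimpleGraph V) (S U : Set V) : Prop :=
  ∃ (i : ι) (D : Set (Fv i)) (φ : ((Gf i).induce D) ↪g G),
    ComponentClosed (Gf i) D ∧
    U = Set.range (fun d : ↥D => φ d) \ S ∧
    IsEmpty (((Gf i).induce D) ↪g (G.induce S))

lemma walk_reach_aux {V : Type} {G : SimpleGraph V} {A : Set V} :
    ∀ {u v : V} (w : G.Walk u v), (∀ x ∈ w.support, x ∈ A) →
      ∀ (hu : u ∈ A) (hv : v ∈ A), (G.induce A).Reachable ⟨u, hu⟩ ⟨v, hv⟩ := by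
  intro u v w
  induction w with
  | nil => intro _ hu hv; exact Reachable.refl _
  | @cons a b c h p ih =>
    intro hw hu hv
    have hb : b ∈ A := hw b (by simp)
    have hadj : (G.induce A).Adj ⟨a, hu⟩ ⟨b, hb⟩ := by simpa using h
    exact hadj.reachable.trans (ih (fun x hx => hw x (by simp [hx])) hb hv)

theorem stmt11 {V : Type} [Fintype V] {ι : Type} [Fintype ι] {Fv : ι → Type}
    [∀ i, Fintype (Fv i)] (Gf : ∀ i, SimpleGraph (Fv i))
    (G : SimpleGraph V) (S T : Set V) (hT : T ⊆ Sᶜ)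
    -- some tight enrichment inside `V(G) \ (S ∪ T)` exists
    (hex : ∃ U : Set V, U ⊆ (S ∪ T)ᶜ ∧ TightEnrichment Gf G S U)
    -- but none all of whose connected components are adjacent to `S`
    (hno : ¬ ∃ U : Set V, U ⊆ (S ∪ T)ᶜ ∧ TightEnrichment Gf G S U ∧
        ∀ u ∈ U, ∃ u' : V, ReachIn G U u u' ∧ ∃ s ∈ S, G.Adj u' s) :
    ∀ U : Set V, U ⊆ (S ∪ T)ᶜ → TightEnrichment Gf G S U →
      (∀ U' : Set V, U' ⊆ (S ∪ T)ᶜ → TightEnrichment Gf G S U' → U.ncard ≤ U'.ncard) →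
      (G.induce U).Connected ∧ ∀ u ∈ U, ∀ s ∈ S, ¬ G.Adj u s := by
  classical
  intro U hU hTE hmin
  push_neg at hno
  obtain ⟨u₀, hu₀U, hu₀⟩ := by
    have := hno U hU hTE
    exact this
  obtain ⟨i, D, φ, hDcc, hUeq, hEmp⟩ := hTE
  -- the component of u₀ in G[U]
  set C : Set V := {v | ReachIn G U u₀ v} with hC
  have hu₀C : u₀ ∈ C := ⟨Walk.nil, by simpa using hu₀U⟩
  have hCsub : C ⊆ U := by
    rintro v ⟨w, hw⟩
    exact hw v (Walk.end_mem_support w)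
  have hUS : U ∩ S = ∅ := by
    rw [hUeq]; ext x; simp
  have hCS : ∀ v ∈ C, ∀ s ∈ S, ¬ G.Adj v s := fun v hv s hs hadj =>
    hu₀ v hv s hs hadj
  have hCext : ∀ v ∈ C, ∀ x ∈ U, G.Adj v x → x ∈ C := by
    rintro v ⟨w, hw⟩ x hxU hadj
    refine ⟨w.concat hadj, ?_⟩
    intro y hy
    rw [Walk.support_concat, List.mem_append] at hy
    rcases hy with h | h
    · exact hw y h
    · simp at h; subst h; exact hxU
  -- key lemma: the image of a walk in D starting in C stays in C
  have L : ∀ (d y : Fv i) (p : (Gf i).Walk d y), (∀ x ∈ p.support, x ∈ D) →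
      ∀ (hd : d ∈ D) (hy : y ∈ D), φ ⟨d, hd⟩ ∈ C → φ ⟨y, hy⟩ ∈ C := by
    intro d y p
    induction p with
    | nil => intro _ hd hy h; exact h
    | @cons a b c h p ih =>
      intro hp hd hy hCmem
      have hb : b ∈ D := hp b (by simp)
      have hadj : G.Adj (φ ⟨a, hd⟩) (φ ⟨b, hb⟩) := by
        rw [φ.map_adj_iff]; simpa using h
      have hbS : φ ⟨b, hb⟩ ∉ S := fun hs => hCS _ hCmem _ hs hadj
      have hbU : φ ⟨b, hb⟩ ∈ U := by
        rw [hUeq]; exact ⟨⟨⟨b, hb⟩, rfl⟩, hbS⟩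
      exact ih (fun x hx => hp x (by simp [hx])) hb hy
        (hCext _ hCmem _ hbU hadj)
  -- D′ : preimage of C, D'' its complement in D
  set D' : Set (Fv i) := {d | ∃ hd : d ∈ D, φ ⟨d, hd⟩ ∈ C} with hD'
  set D'' : Set (Fv i) := D \ D' with hD''
  have hD'cc : ∀ d, ∀ hd : d ∈ D, φ ⟨d, hd⟩ ∈ C → ∀ y, (Gf i).Reachable d y →
      ∃ hy : y ∈ D, φ ⟨y, hy⟩ ∈ C := by
    intro d hd hdc y hr
    have hy : y ∈ D := hDcc d hd y hr
    obtain ⟨p⟩ := hr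
    have hps : ∀ x ∈ p.support, x ∈ D := fun x hx =>
      hDcc d hd x ⟨p.takeUntil x hx⟩
    exact ⟨hy, L d y p hps hd hy hdc⟩
  have hD''cc : ComponentClosed (Gf i) D'' := by
    rintro x ⟨hxD, hxD'⟩ y hr
    have hyD : y ∈ D := hDcc x hxD y hr
    refine ⟨hyD, ?_⟩
    rintro ⟨hyD2, hyC⟩
    obtain ⟨hxD2, hxC⟩ := hD'cc y hyD2 hyC x hr.symm
    exact hxD' ⟨hxD2, hxC⟩
  by_cases hE : IsEmpty (((Gf i).induce D'') ↪g (G.induce S))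
  · -- then U \ C is a smaller tight enrichment: contradiction with minimality
    exfalso
    let φ₂ : ((Gf i).induce D'') ↪g G :=
      { toFun := fun x => φ ⟨x.1, x.2.1⟩
        inj' := by
          rintro ⟨a, ha⟩ ⟨b, hb⟩ hab
          have h1 : (⟨a, ha.1⟩ : ↥D) = ⟨b, hb.1⟩ := φ.injective hab
          have h2 : a = b := congrArg Subtype.val h1
          exact Subtype.ext h2
        map_rel_iff' := by
          rintro ⟨a, ha⟩ ⟨b, hb⟩
          show G.Adj (φ ⟨a, ha.1⟩) (φ ⟨b, hb.1⟩) ↔ _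
          rw [φ.map_adj_iff]
          simp }
    have hTE2 : TightEnrichment Gf G S (U \ C) := by
      refine ⟨i, D'', φ₂, hD''cc, ?_, hE⟩
      ext v
      constructor
      · rintro ⟨hvU, hvC⟩
        have hvU' := hvU
        rw [hUeq] at hvU'
        obtain ⟨⟨⟨d, hd⟩, rfl⟩, hvS⟩ := hvU'
        have hdD'' : d ∈ D'' := by
          refine ⟨hd, ?_⟩
          rintro ⟨hd2, hdc⟩
          exact hvC hdc
        refine ⟨⟨⟨d, hdD''⟩, ?_⟩, hvS⟩
        show φ ⟨d, hdD''.1⟩ = φ ⟨d, hd⟩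
        rfl
      · rintro ⟨⟨⟨d, hdD''⟩, rfl⟩, hvS⟩
        have heq : (φ₂ ⟨d, hdD''⟩ : V) = φ ⟨d, hdD''.1⟩ := rfl
        constructor
        · rw [hUeq]
          exact ⟨⟨⟨d, hdD''.1⟩, heq.symm⟩, hvS⟩
        · intro hc
          exact hdD''.2 ⟨hdD''.1, hc⟩
    have hle := hmin (U \ C) (fun x hx => hU hx.1) hTE2
    have hlt : (U \ C).ncard < U.ncard := by
      apply Set.ncard_lt_ncard
      · exact ⟨Set.diff_subset, fun hsub => (hsub hu₀U).2 hu₀C⟩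
      · exact Set.toFinite U
    omega
  · -- otherwise C itself is a tight enrichment, hence C = U by minimality
    rw [not_isEmpty_iff] at hE
    obtain ⟨χ⟩ := hE
    -- new embedding of induce D into G : φ on D', χ on D''
    have key : ∀ x : ↥D, ¬ φ x ∈ C → x.1 ∈ D'' := by
      rintro ⟨d, hd⟩ h
      exact ⟨hd, fun ⟨hd2, hc⟩ => h hc⟩
    let f : ↥D → V := fun x =>
      if h : φ x ∈ C then φ x else (χ ⟨x.1, key x h⟩ : V)
    have hf1 : ∀ (x : ↥D) (h : φ x ∈ C), f x = φ x := by
      intro x h; simp only [f, dif_pos h]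
    have hf2 : ∀ (x : ↥D) (h : ¬ φ x ∈ C), f x = (χ ⟨x.1, key x h⟩ : V) := by
      intro x h; simp only [f, dif_neg h]
    have hχS : ∀ y : ↥D'', (χ y : V) ∈ S := fun y => (χ y).2
    have hfadj : ∀ a b : ↥D, G.Adj (f a) (f b) ↔ ((Gf i).induce D).Adj a b := by
      intro a b
      by_cases ha : φ a ∈ C <;> by_cases hb : φ b ∈ C
      · rw [hf1 a ha, hf1 b hb, φ.map_adj_iff]
      · rw [hf1 a ha, hf2 b hb]
        constructor
        · intro h; exact absurd h (hCS _ ha _ (hχS _))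
        · intro h
          exfalso
          have hGadj : (Gf i).Adj a.1 b.1 := by simpa using h
          obtain ⟨hbD, hbC⟩ := hD'cc a.1 a.2 ha b.1 hGadj.reachable
          have heq : (⟨b.1, hbD⟩ : ↥D) = b := Subtype.ext rfl
          rw [heq] at hbC
          exact hb hbC
      · rw [hf2 a ha, hf1 b hb]
        constructor
        · intro h; exact absurd h.symm (hCS _ hb _ (hχS _))
        · intro h
          exfalso
          have hGadj : (Gf i).Adj b.1 a.1 := by simpa using h.symm
          obtain ⟨haD, haC⟩ := hD'cc b.1 b.2 hb a.1 hGadj.reachable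
          have heq : (⟨a.1, haD⟩ : ↥D) = a := Subtype.ext rfl
          rw [heq] at haC
          exact ha haC
      · rw [hf2 a ha, hf2 b hb]
        have hiff := χ.map_adj_iff (v := ⟨a.1, key a ha⟩) (w := ⟨b.1, key b hb⟩)
        constructor
        · intro h
          have h2 : (G.induce S).Adj (χ ⟨a.1, key a ha⟩) (χ ⟨b.1, key b hb⟩) := by
            simpa using h
          have := hiff.1 h2
          simpa using this
        · intro h
          have h2 : ((Gf i).induce D'').Adj ⟨a.1, key a ha⟩ ⟨b.1, key b hb⟩ := by
            simpa using h
          have := hiff.2 h2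
          simpa using this
    have hfinj : Function.Injective f := by
      intro a b hab
      by_cases ha : φ a ∈ C <;> by_cases hb : φ b ∈ C
      · rw [hf1 a ha, hf1 b hb] at hab; exact φ.injective hab
      · rw [hf1 a ha, hf2 b hb] at hab
        exfalso
        have hmem : φ a ∈ S := hab ▸ hχS ⟨b.1, key b hb⟩
        have : φ a ∈ U ∩ S := ⟨hCsub ha, hmem⟩
        rw [hUS] at this; exact this
      · rw [hf2 a ha, hf1 b hb] at hab
        exfalso
        have hmem : φ b ∈ S := hab ▸ hχS ⟨a.1, key a ha⟩
        have : φ b ∈ U ∩ S := ⟨hCsub hb, hmem⟩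
        rw [hUS] at this; exact this
      · rw [hf2 a ha, hf2 b hb] at hab
        have h1 := χ.injective (Subtype.ext hab)
        exact Subtype.ext (congrArg (fun z : ↥D'' => z.1) h1)
    let φ₃ : ((Gf i).induce D) ↪g G :=
      { toFun := f, inj' := hfinj, map_rel_iff' := fun {a b} => hfadj a b }
    have hTE3 : TightEnrichment Gf G S C := by
      refine ⟨i, D, φ₃, hDcc, ?_, hEmp⟩
      ext v
      constructor
      · intro hv
        have hvU := hCsub hv
        rw [hUeq] at hvU
        obtain ⟨⟨x, rfl⟩, hvS⟩ := hvU
        refine ⟨⟨x, ?_⟩, hvS⟩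
        show f x = φ x
        exact hf1 x hv
      · rintro ⟨⟨x, rfl⟩, hvS⟩
        by_cases h : φ x ∈ C
        · show f x ∈ C
          rw [hf1 x h]; exact h
        · exfalso
          apply hvS
          show f x ∈ S
          rw [hf2 x h]
          exact hχS _
    have hle := hmin C (fun x hx => hU (hCsub hx)) hTE3
    have hCU : C = U := Set.eq_of_subset_of_ncard_le hCsub hle (Set.toFinite U)
    constructor
    · rw [SimpleGraph.connected_iff]
      refine ⟨?_, ⟨⟨u₀, hu₀U⟩⟩⟩
      intro a b
      have hra : ∀ x : ↥U, (G.induce U).Reachable ⟨u₀, hu₀U⟩ x := by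
        rintro ⟨x, hx⟩
        have hxC : x ∈ C := hCU ▸ hx
        obtain ⟨w, hw⟩ := hxC
        exact walk_reach_aux w hw hu₀U hx
      exact (hra a).symm.trans (hra b)
    · intro u hu s hs
      have huC : u ∈ C := hCU ▸ hu
      exact hCS u huC s hs
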